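/- Let G be a non-abelian, irreducible subgroup of PL_o([a,c]), where a < c. If the character χ_ℓ = ln∘σ_ℓ (restricted to G) is non-zero, then [χ_ℓ] ∉ Σ¹(G). Similarly, if χ_r = ln∘σ_r is non-zero then [χ_r] ∉ Σ¹(G). -/

import Mathlib

open Set

/-- A map `g : ℝ → ℝ` is *finitary piecewise linear* if there is a finite set of
breakpoints outside of which `g` is locally affine. -/
def IsFinitaryPL (g : ℝ → ℝ) : Prop :=
  ∃ B : Finset ℝ, ∀ t : ℝ, t ∉ B →
    ∃ m b : ℝ, ∃ ε : ℝ, 0 < ε ∧ ∀ u : ℝ, |u - t| < ε → g u = m * u + b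

/-- The support of a map of the real line. -/
def suppOf (g : ℝ → ℝ) : Set ℝ := {t : ℝ | g t ≠ t}

/-- `PLo I` is the set of orientation-preserving (i.e. strictly increasing) finitary
piecewise linear homeomorphisms of `ℝ` with support contained in `I`. -/
def PLo (I : Set ℝ) : Set (Equiv.Perm ℝ) :=
  {g : Equiv.Perm ℝ | StrictMono ⇑g ∧ IsFinitaryPL ⇑g ∧ suppOf ⇑g ⊆ I}

/-- The right derivative of `g` at `a`. -/
noncomputable def rightSlope (g : ℝ → ℝ) (a : ℝ) : ℝ := derivWithin g (Ici a) a

/-- The left derivative of `g` at `c`. -/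
noncomputable def leftSlope (g : ℝ → ℝ) (c : ℝ) : ℝ := derivWithin g (Iic c) c

/-- The amplitude of the translation with which `g` coincides near `+∞`. -/
noncomputable def amplTop (g : ℝ → ℝ) : ℝ :=
  Filter.limUnder Filter.atTop (fun t => g t - t)

/-- The amplitude of the translation with which `g` coincides near `-∞`. -/
noncomputable def amplBot (g : ℝ → ℝ) : ℝ :=
  Filter.limUnder Filter.atBot (fun t => g t - t)

/-- A character of a group is a homomorphism into `(ℝ, +)`. -/
def IsChar {Γ : Type*} [Group Γ] (χ : Γ → ℝ) : Prop :=
  ∀ g h : Γ, χ (g * h) = χ g + χ h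

/-- Two characters lie on the same ray: `ψ` is a positive multiple of `χ`. -/
def SameRayChar {Γ : Type*} (χ ψ : Γ → ℝ) : Prop :=
  ∃ r : ℝ, 0 < r ∧ ∀ g : Γ, ψ g = r * χ g

/-- The subgraph `Γ(G, X)_χ` of the Cayley graph of `G` with respect to the generating
set `X`, spanned by the vertices `g` with `χ g ≥ 0`, is connected. -/
def CayleyConnected {Γ : Type*} [Group Γ] (X : Set Γ) (χ : Γ → ℝ) : Prop :=
  ∀ g h : Γ, 0 ≤ χ g → 0 ≤ χ h →
    Relation.ReflTransGen
      (fun u v : Γ => 0 ≤ χ u ∧ 0 ≤ χ v ∧ ∃ x ∈ X, v = u * x ∨ u = v * x) g h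

/-- `[χ] ∈ Σ¹(G)`: for every generating set `X` of `G` the subgraph `Γ(G,X)_χ`
of the Cayley graph is connected. -/
def MemSigma1 {Γ : Type*} [Group Γ] (χ : Γ → ℝ) : Prop :=
  ∀ X : Set Γ, Subgroup.closure X = ⊤ → CayleyConnected X χ

/-- The character `χ_ℓ = ln ∘ σ_ℓ` of a subgroup `G` of `PL_o([a,c])`. -/
noncomputable def chiL (G : Subgroup (Equiv.Perm ℝ)) (a : ℝ) : G → ℝ :=
  fun g => Real.log (rightSlope (⇑(g : Equiv.Perm ℝ)) a)

/-- The character `χ_r = ln ∘ σ_r` of a subgroup `G` of `PL_o([a,c])`. -/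
noncomputable def chiR (G : Subgroup (Equiv.Perm ℝ)) (c : ℝ) : G → ℝ :=
  fun g => Real.log (leftSlope (⇑(g : Equiv.Perm ℝ)) c)

/-- right-affine form near `a` -/
def AffR (a : ℝ) (g : ℝ → ℝ) (m e : ℝ) : Prop :=
  ∀ t, a ≤ t → t < a + e → g t = a + m * (t - a)

lemma AffR.mono {a g m e e'} (h : AffR a g m e) (he : e' ≤ e) : AffR a g m e' :=
  fun t ht ht' => h t ht (ht'.trans_le (by linarith))

lemma AffR.comp {a : ℝ} {g h : ℝ → ℝ} {m₁ e₁ m₂ e₂ e : ℝ}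
    (hg : AffR a g m₁ e₁) (hh : AffR a h m₂ e₂) (hm₂ : 0 < m₂)
    (he₂ : e ≤ e₂) (he₁ : m₂ * e ≤ e₁) :
    AffR a (fun t => g (h t)) (m₁ * m₂) e := by
  intro t ht ht'
  have h1 : h t = a + m₂ * (t - a) := hh t ht (ht'.trans_le (by linarith))
  have h2 : a ≤ h t := by nlinarith
  have h3 : h t < a + e₁ := by nlinarith
  show g (h t) = a + m₁ * m₂ * (t - a)
  rw [hg _ h2 h3, h1]; ring

lemma AffR.inv {a : ℝ} {g : Equiv.Perm ℝ} {m e : ℝ}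
    (hg : AffR a ⇑g m e) (hm : 0 < m) : AffR a ⇑g⁻¹ m⁻¹ (m * e) := by
  intro t ht ht'
  have h2 : a ≤ a + m⁻¹ * (t - a) := by
    have := inv_pos.2 hm; nlinarith
  have h3 : a + m⁻¹ * (t - a) < a + e := by
    have h4 : m⁻¹ * (t - a) < m⁻¹ * (m * e) := by
      apply mul_lt_mul_of_pos_left _ (inv_pos.2 hm); linarith
    rw [inv_mul_cancel_left₀ (ne_of_gt hm)] at h4; linarith
  have := hg _ h2 h3
  have ht2 : g (a + m⁻¹ * (t - a)) = t := by
    rw [this]; field_simp; ring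
  calc ⇑g⁻¹ t = ⇑g⁻¹ (g (a + m⁻¹ * (t - a))) := by rw [ht2]
  _ = a + m⁻¹ * (t - a) := g.symm_apply_apply _

lemma AffR.pow {a : ℝ} {g : Equiv.Perm ℝ} {m e : ℝ}
    (hg : AffR a ⇑g m e) (hm : 0 < m) (hm1 : m ≤ 1) (he : 0 ≤ e) (n : ℕ) :
    AffR a ⇑(g ^ n) (m ^ n) e := by
  induction n with
  | zero => intro t ht ht'; simp
  | succ n ih =>
    have : AffR a (fun t => g ((g ^ n) t)) (m * m ^ n) e :=
      hg.comp ih (pow_pos hm n) le_rfl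
        (by nlinarith [pow_le_one₀ hm.le hm1 (n := n)])
    intro t ht ht'
    have h1 := this t ht ht'
    simp only [pow_succ', Equiv.Perm.mul_apply]
    simpa using h1

lemma AffR.unique {a : ℝ} {g : ℝ → ℝ} {m e m' e' : ℝ}
    (h : AffR a g m e) (h' : AffR a g m' e') (he : 0 < e) (he' : 0 < e') : m = m' := by
  set t := a + min e e' / 2 with hts
  have h0 : 0 < min e e' := lt_min he he'
  have ht : a ≤ t := by simp [hts]; linarith
  have h1 := h t ht (by simp [hts]; linarith [min_le_left e e'])
  have h2 := h' t ht (by simp [hts]; linarith [min_le_right e e'])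
  rw [h1] at h2
  have : t - a ≠ 0 := by simp [hts]; linarith
  field_simp at h2
  have h3 : (m - m') * (t - a) = 0 := by linarith [h2]
  rcases mul_eq_zero.1 h3 with h2 | h2
  · linarith
  · exact absurd h2 this

lemma AffR.rightSlope_eq {a : ℝ} {g : ℝ → ℝ} {m e : ℝ}
    (h : AffR a g m e) (he : 0 < e) : rightSlope g a = m := by
  have H : HasDerivWithinAt (fun t : ℝ => a + m * (t - a)) m (Ici a) a := by
    have : HasDerivAt (fun t : ℝ => a + m * (t - a)) (m * 1) a :=
      (((hasDerivAt_id a).sub_const a).const_mul m).const_add a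
    simpa using this.hasDerivWithinAt
  have Heq : (g : ℝ → ℝ) =ᶠ[nhdsWithin a (Ici a)] (fun t : ℝ => a + m * (t - a)) := by
    rw [eventuallyEq_nhdsWithin_iff]
    filter_upwards [Ioo_mem_nhds (show a - e < a by linarith) (show a < a + e by linarith)]
      with t ht hta
    exact h t hta ht.2
  have H2 : HasDerivWithinAt g m (Ici a) a :=
    H.congr_of_eventuallyEq Heq (by rw [h a le_rfl (by linarith)])
  exact H2.derivWithin (uniqueDiffOn_Ici a a Set.self_mem_Ici)

lemma AffR.id_of_slope_one {a : ℝ} {g : Equiv.Perm ℝ} {e : ℝ}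
    (h : AffR a ⇑g 1 e) {t : ℝ} (ht : a ≤ t) (ht' : t < a + e) : g t = t := by
  have := h t ht ht'; rw [this]; ring


lemma PLo.continuous {I : Set ℝ} {g : Equiv.Perm ℝ} (hg : g ∈ PLo I) : Continuous ⇑g :=
  (StrictMono.orderIsoOfSurjective ⇑g hg.1 g.surjective).continuous

lemma PLo.fix_outside {a c : ℝ} {g : Equiv.Perm ℝ} (hg : g ∈ PLo (Icc a c))
    {t : ℝ} (ht : t ∉ Icc a c) : g t = t := by
  by_contra h
  exact ht (hg.2.2 h)

lemma PLo.fix_left {a c : ℝ} (hac : a < c) {g : Equiv.Perm ℝ} (hg : g ∈ PLo (Icc a c)) :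
    g a = a := by
  have h1 : Filter.Tendsto ⇑g (nhdsWithin a (Iio a)) (nhds (g a)) :=
    ((PLo.continuous hg).tendsto a).mono_left nhdsWithin_le_nhds
  have h2 : Filter.Tendsto ⇑g (nhdsWithin a (Iio a)) (nhds a) := by
    apply Filter.Tendsto.congr' _ (tendsto_nhdsWithin_of_tendsto_nhds Filter.tendsto_id)
    filter_upwards [self_mem_nhdsWithin] with t ht
    exact (PLo.fix_outside hg (by simp [ht.out.not_ge])).symm
  exact tendsto_nhds_unique h1 h2

lemma PLo.fix_right {a c : ℝ} (hac : a < c) {g : Equiv.Perm ℝ} (hg : g ∈ PLo (Icc a c)) :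
    g c = c := by
  have h1 : Filter.Tendsto ⇑g (nhdsWithin c (Ioi c)) (nhds (g c)) :=
    ((PLo.continuous hg).tendsto c).mono_left nhdsWithin_le_nhds
  have h2 : Filter.Tendsto ⇑g (nhdsWithin c (Ioi c)) (nhds c) := by
    apply Filter.Tendsto.congr' _ (tendsto_nhdsWithin_of_tendsto_nhds Filter.tendsto_id)
    filter_upwards [self_mem_nhdsWithin] with t ht
    exact (PLo.fix_outside hg (by simp [ht.out.not_ge])).symm
  exact tendsto_nhds_unique h1 h2

/-- Every element of `PLo (Icc a c)` is affine on a small right-neighbourhood of `a`,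
with positive slope. -/
lemma PLo.exists_affR {a c : ℝ} (hac : a < c) {g : Equiv.Perm ℝ} (hg : g ∈ PLo (Icc a c)) :
    ∃ m e : ℝ, 0 < m ∧ 0 < e ∧ AffR a ⇑g m e := by
  obtain ⟨B, hB⟩ := hg.2.1
  -- choose e > 0 with Ioo a (a+e) disjoint from B
  obtain ⟨e, he, heB⟩ : ∃ e : ℝ, 0 < e ∧ ∀ b ∈ B, b ∉ Ioo a (a + e) := by
    by_cases hne : (B.filter (fun b => a < b)).Nonempty
    · refine ⟨(B.filter (fun b => a < b)).min' hne - a, ?_, ?_⟩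
      · have := (B.filter (fun b => a < b)).min'_mem hne
        have := (Finset.mem_filter.1 this).2
        linarith
      · intro b hb hmem
        have hab : a < b := hmem.1
        have : (B.filter (fun b => a < b)).min' hne ≤ b :=
          Finset.min'_le _ _ (Finset.mem_filter.2 ⟨hb, hab⟩)
        have := hmem.2
        linarith
    · refine ⟨1, one_pos, fun b hb hmem => hne ⟨b, Finset.mem_filter.2 ⟨hb, hmem.1⟩⟩⟩
  -- on s := Ioo a (a+e), g is locally affine everywhere
  set s : Set ℝ := Ioo a (a + e) with hs
  set t₀ : ℝ := a + e / 2 with ht₀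
  have ht₀s : t₀ ∈ s := by constructor <;> [skip; skip] <;> simp [ht₀] <;> linarith
  obtain ⟨m₀, b₀, ε₀, hε₀, h₀⟩ := hB t₀ (fun h => heB t₀ h ht₀s)
  -- the clopen-type argument
  set u : Set ℝ := {t | ∀ᶠ v in nhds t, g v = m₀ * v + b₀} with hu
  set v : Set ℝ := {t | ∃ m b : ℝ, (m ≠ m₀ ∨ b ≠ b₀) ∧ ∀ᶠ w in nhds t, g w = m * w + b} with hv
  have huo : IsOpen u := by
    rw [isOpen_iff_mem_nhds]
    intro t ht
    exact ht.eventually_nhds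
  have hvo : IsOpen v := by
    rw [isOpen_iff_mem_nhds]
    intro t ht
    obtain ⟨m, b, hne, hev⟩ := ht
    filter_upwards [hev.eventually_nhds] with w hw
    exact ⟨m, b, hne, hw⟩
  have huv : Disjoint u v := by
    rw [Set.disjoint_left]
    rintro t htu ⟨m, b, hne, hev⟩
    -- both affine forms hold near t, get two points
    have hboth := htu.and hev
    rw [Metric.eventually_nhds_iff] at hboth
    obtain ⟨ε, hε, hb⟩ := hboth
    have h1 := hb (y := t) (by simp [hε])
    have h2 := hb (y := t + ε / 2) (by simp [abs_of_nonneg, hε.le]; linarith)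
    have hm : m = m₀ := by
      have := h1.1.symm.trans h1.2
      have := h2.1.symm.trans h2.2
      nlinarith
    have hbb : b = b₀ := by
      have := h1.1.symm.trans h1.2
      rw [hm] at this; linarith
    rcases hne with h | h
    · exact h hm
    · exact h hbb
  have hsuv : s ⊆ u ∪ v := by
    intro t hts
    obtain ⟨m, b, ε, hε, h⟩ := hB t (fun h => heB t h hts)
    have hev : ∀ᶠ w in nhds t, g w = m * w + b :=
      Metric.eventually_nhds_iff.2 ⟨ε, hε, fun {y} hy => h y hy⟩
    by_cases hc : m = m₀ ∧ b = b₀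
    · left; rw [hc.1, hc.2] at hev; exact hev
    · right
      rcases Classical.em (m = m₀) with h1 | h1
      · exact ⟨m, b, Or.inr (fun hb2 => hc ⟨h1, hb2⟩), hev⟩
      · exact ⟨m, b, Or.inl h1, hev⟩
  have hsu : (s ∩ u).Nonempty :=
    ⟨t₀, ht₀s, Metric.eventually_nhds_iff.2 ⟨ε₀, hε₀, fun {y} hy => h₀ y hy⟩⟩
  have hsub : s ⊆ u :=
    isPreconnected_Ioo.subset_left_of_subset_union huo hvo huv hsuv hsu
  have haff : ∀ t ∈ s, g t = m₀ * t + b₀ := fun t hts => (hsub hts).self_of_nhds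
  -- identify b₀ using g a = a and continuity
  have hga : g a = a := PLo.fix_left hac hg
  have hlim1 : Filter.Tendsto ⇑g (nhdsWithin a (Ioi a)) (nhds (g a)) :=
    ((PLo.continuous hg).tendsto a).mono_left nhdsWithin_le_nhds
  have hlim2 : Filter.Tendsto ⇑g (nhdsWithin a (Ioi a)) (nhds (m₀ * a + b₀)) := by
    apply Filter.Tendsto.congr'
      (f₁ := fun t => m₀ * t + b₀)
    · filter_upwards [Ioo_mem_nhdsGT_of_mem (show a ∈ Ico a (a+e) from ⟨le_rfl, by linarith⟩)] with t ht
      exact (haff t ht).symm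
    · exact ((continuous_const.mul continuous_id).add continuous_const).tendsto' a _ rfl
        |>.mono_left nhdsWithin_le_nhds
  have hb₀ : m₀ * a + b₀ = a := by
    have := tendsto_nhds_unique hlim1 hlim2
    rw [hga] at this; exact this.symm
  have hm₀ : 0 < m₀ := by
    have h1 : g t₀ > g a := (hg.1) (by simp [ht₀]; linarith)
    have h2 : g t₀ = m₀ * t₀ + b₀ := haff t₀ ht₀s
    rw [hga, h2, ht₀] at h1
    nlinarith
  refine ⟨m₀, e, hm₀, he, fun t hta hte => ?_⟩
  rcases eq_or_lt_of_le hta with h | h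
  · rw [← h, hga]; ring
  · rw [haff t ⟨h, hte⟩]; linarith


lemma AffR.congr {a m e : ℝ} {f g : ℝ → ℝ} (h : AffR a f m e) (hfg : ∀ t, g t = f t) :
    AffR a g m e := fun t ht ht' => (hfg t).trans (h t ht ht')

set_option maxHeartbeats 1000000 in
theorem core_not_memSigma1 (a c : ℝ) (hac : a < c)
    (G : Subgroup (Equiv.Perm ℝ)) (hG : (G : Set (Equiv.Perm ℝ)) ⊆ PLo (Icc a c))
    (hna : ∃ g ∈ G, ∃ h ∈ G, g * h ≠ h * g)
    (hirr : ∀ t : ℝ, a < t → t < c → ∃ g ∈ G, g t ≠ t)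
    (hχ : ∃ g : G, chiL G a g ≠ 0) : ¬ MemSigma1 (chiL G a) := by
  intro hmem
  have hPL : ∀ g : G, (g : Equiv.Perm ℝ) ∈ PLo (Icc a c) := fun g => hG g.2
  choose M E hM hE hAff using fun g : G => PLo.exists_affR hac (hPL g)
  have hslope : ∀ g : G, rightSlope (⇑(g : Equiv.Perm ℝ)) a = M g :=
    fun g => (hAff g).rightSlope_eq (hE g)
  have hchi : ∀ g : G, chiL G a g = Real.log (M g) := fun g => by
    simp only [chiL]; rw [hslope]
  -- M is multiplicative
  have hMmul : ∀ g h : G, M (g * h) = M g * M h := by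
    intro g h
    have h1 : AffR a (fun t => (g : Equiv.Perm ℝ) ((h : Equiv.Perm ℝ) t)) (M g * M h)
        (min (E h) (E g / M h)) :=
      (hAff g).comp (hAff h) (hM h) (min_le_left _ _) (by
        rw [mul_comm]
        calc min (E h) (E g / M h) * M h ≤ (E g / M h) * M h :=
          mul_le_mul_of_nonneg_right (min_le_right _ _) (hM h).le
        _ = E g := div_mul_cancel₀ _ (ne_of_gt (hM h)))
    have h2 : AffR a (⇑((g * h : G) : Equiv.Perm ℝ)) (M g * M h) (min (E h) (E g / M h)) :=
      h1.congr (fun t => by simp [Equiv.Perm.mul_apply])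
    exact (hAff (g * h)).unique h2 (hE _) (lt_min (hE h) (div_pos (hE g) (hM h)))
  have hMone : M 1 = 1 := by
    have h2 : AffR a (⇑((1 : G) : Equiv.Perm ℝ)) 1 1 := fun t ht ht' => by simp
    exact (hAff 1).unique h2 (hE _) one_pos
  have hMinv : ∀ g : G, M g⁻¹ = (M g)⁻¹ := by
    intro g
    have h1 := (hAff g).inv (hM g)
    have h2 : AffR a (⇑((g⁻¹ : G) : Equiv.Perm ℝ)) (M g)⁻¹ (M g * E g) :=
      h1.congr (fun t => by simp)
    exact (hAff g⁻¹).unique h2 (hE _) (mul_pos (hM g) (hE g))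
  have hMpow : ∀ (g : G) (n : ℕ), M (g ^ n) = (M g) ^ n := by
    intro g n
    induction n with
    | zero => simpa using hMone
    | succ n ih => rw [pow_succ, hMmul, ih, pow_succ]
  have hMzpow : ∀ (g : G) (k : ℤ), M (g ^ k) = (M g) ^ k := by
    intro g k
    cases k with
    | ofNat n => rw [Int.ofNat_eq_coe, zpow_natCast, zpow_natCast, hMpow]
    | negSucc n => rw [zpow_negSucc, zpow_negSucc, hMinv, hMpow]
  have hMone_le : ∀ g : G, 0 ≤ chiL G a g → 1 ≤ M g := by
    intro g hg
    by_contra hlt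
    rw [not_le] at hlt
    rw [hchi] at hg
    exact absurd (Real.log_neg (hM g) hlt) (not_lt.2 hg)
  -- pick a contracting element l
  obtain ⟨g₀, hg₀⟩ := hχ
  have hg₀1 : M g₀ ≠ 1 := fun h => hg₀ (by rw [hchi, h, Real.log_one])
  obtain ⟨l, hl1⟩ : ∃ l : G, M l < 1 := by
    rcases lt_or_gt_of_ne hg₀1 with h | h
    · exact ⟨g₀, h⟩
    · exact ⟨g₀⁻¹, by rw [hMinv]; exact inv_lt_one_of_one_lt₀ h⟩
  set ml := M l with hml
  set el := E l with hel
  have hmlp : 0 < ml := hM l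
  have help : 0 < el := hE l
  set δ := ml * el with hδ
  have hδp : 0 < δ := mul_pos hmlp help
  have hδle : δ ≤ el := by nlinarith
  -- the generating set
  set X : Set G := {x : G | AffR a (⇑(x : Equiv.Perm ℝ)) (M x) δ ∧
      AffR a (⇑((x⁻¹ : G) : Equiv.Perm ℝ)) (M x⁻¹) δ} with hX
  have hlX : l ∈ X := by
    constructor
    · exact (hAff l).mono hδle
    · have h1 := (hAff l).inv (hM l)
      have h2 : AffR a (⇑((l⁻¹ : G) : Equiv.Perm ℝ)) (M l⁻¹) (ml * el) := by
        rw [hMinv]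
        exact h1.congr (fun t => by simp)
      exact h2.mono (le_of_eq hδ.symm)
  -- X generates G
  have hgen : Subgroup.closure X = ⊤ := by
    rw [Subgroup.eq_top_iff']
    intro g
    have hml1 : (1 : ℝ) < ml⁻¹ := (one_lt_inv₀ hmlp).2 hl1
    obtain ⟨n, hn1, hn2⟩ := exists_mem_Ioc_zpow (hM g) hml1
    set k : ℤ := n + 1 with hk
    set g' : G := g * l ^ k with hg'
    have hmlne : ml ≠ 0 := ne_of_gt hmlp
    have hzp : ∀ j : ℤ, (0:ℝ) < ml ^ j := fun j => zpow_pos hmlp j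
    have hinvz : ∀ j : ℤ, (ml⁻¹ : ℝ) ^ j = (ml ^ j)⁻¹ := fun j => by rw [inv_zpow]
    have hMg' : M g' = M g * ml ^ k := by rw [hg', hMmul, hMzpow]
    have hMg'le : M g' ≤ 1 := by
      rw [hMg', hk]
      rw [hinvz] at hn2
      calc M g * ml ^ (n+1) ≤ (ml ^ (n+1))⁻¹ * ml ^ (n+1) :=
            mul_le_mul_of_nonneg_right hn2 (hzp _).le
      _ = 1 := inv_mul_cancel₀ (ne_of_gt (hzp _))
    have hMg'gt : ml < M g' := by
      rw [hMg', hk]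
      rw [hinvz] at hn1
      have h3 : (ml ^ n)⁻¹ * ml ^ (n+1) < M g * ml ^ (n+1) :=
        mul_lt_mul_of_pos_right hn1 (hzp _)
      have h4 : (ml ^ n)⁻¹ * ml ^ (n+1) = ml := by
        rw [← zpow_neg, ← zpow_add₀ hmlne]
        norm_num
      linarith
    have hMg'p : 0 < M g' := hM g'
    -- choose N with ml ^ N * el ≤ E g'
    obtain ⟨N, hN⟩ := exists_pow_lt_of_lt_one (div_pos (hE g') help) hl1
    have hNle : ml ^ N * el ≤ E g' := by
      have h5 : ml ^ N * el < (E g' / el) * el := mul_lt_mul_of_pos_right hN help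
      rw [div_mul_cancel₀ _ (ne_of_gt help)] at h5
      exact h5.le
    set h : G := (l ^ N)⁻¹ * (g' * l ^ N) with hh
    have hpowp : (0:ℝ) < ml ^ N := pow_pos hmlp N
    -- affine data for h
    have A1 : AffR a (⇑((l ^ N : G) : Equiv.Perm ℝ)) (ml ^ N) el := by
      have := (hAff l).pow (hM l) hl1.le help.le N
      exact this.congr (fun t => by
        rw [show ((l ^ N : G) : Equiv.Perm ℝ) = ((l : Equiv.Perm ℝ)) ^ N by
          push_cast; ring])
    have A2 : AffR a (fun t => (g' : Equiv.Perm ℝ) (((l ^ N : G) : Equiv.Perm ℝ) t))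
        (M g' * ml ^ N) el :=
      (hAff g').comp A1 hpowp le_rfl hNle
    have A2' : AffR a (⇑((g' * l ^ N : G) : Equiv.Perm ℝ)) (M g' * ml ^ N) el :=
      A2.congr (fun t => by simp [Equiv.Perm.mul_apply])
    have A3 : AffR a (⇑(((l ^ N : G) : Equiv.Perm ℝ))⁻¹) (ml ^ N)⁻¹ (ml ^ N * el) :=
      A1.inv hpowp
    have A4 : AffR a (fun t => (((l ^ N : G) : Equiv.Perm ℝ))⁻¹
        (((g' * l ^ N : G) : Equiv.Perm ℝ) t)) ((ml ^ N)⁻¹ * (M g' * ml ^ N)) el :=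
      A3.comp A2' (mul_pos hMg'p hpowp) le_rfl
        (by nlinarith [mul_nonneg (sub_nonneg.2 hMg'le) (mul_pos hpowp help).le])
    have hslopeh : (ml ^ N)⁻¹ * (M g' * ml ^ N) = M g' := by
      field_simp
    have Ah : AffR a (⇑((h : G) : Equiv.Perm ℝ)) (M g') el := by
      rw [← hslopeh]
      exact A4.congr (fun t => by simp [hh, Equiv.Perm.mul_apply])
    have hMh : M h = M g' := (hAff h).unique Ah (hE h) help
    have hhX : h ∈ X := by
      constructor
      · rw [hMh]
        exact Ah.mono hδle
      · have h6 := Ah.inv hMg'p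
        have h7 : AffR a (⇑((h⁻¹ : G) : Equiv.Perm ℝ)) (M h⁻¹) (M g' * el) := by
          rw [hMinv, hMh]
          exact h6.congr (fun t => by simp)
        exact h7.mono (by nlinarith)
    -- assemble
    have hlmem : l ∈ Subgroup.closure X := Subgroup.subset_closure hlX
    have hhmem : h ∈ Subgroup.closure X := Subgroup.subset_closure hhX
    have hgeq : g = l ^ N * h * (l ^ N)⁻¹ * (l ^ k)⁻¹ := by
      rw [hh, hg']; group
    rw [hgeq]
    exact Subgroup.mul_mem _ (Subgroup.mul_mem _ (Subgroup.mul_mem _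
      (Subgroup.pow_mem _ hlmem N) hhmem) (Subgroup.inv_mem _ (Subgroup.pow_mem _ hlmem N)))
      (Subgroup.inv_mem _ (Subgroup.zpow_mem _ hlmem k))
  -- the non-trivial commutator
  obtain ⟨gp, hgpG, hp, hhpG, hne2⟩ := hna
  set A : G := ⟨gp, hgpG⟩ with hA
  set B : G := ⟨hp, hhpG⟩ with hB
  set k₀ : G := A * B * A⁻¹ * B⁻¹ with hk₀
  have hk₀ne : k₀ ≠ 1 := by
    intro hcon
    apply hne2
    have h2 : (A * B * A⁻¹ * B⁻¹) * (B * A) = B * A := by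
      rw [← hk₀, hcon, one_mul]
    have h3 : A * B = B * A := by
      calc A * B = (A * B * A⁻¹ * B⁻¹) * (B * A) := by group
      _ = B * A := h2
    exact congrArg Subtype.val h3
  have hMk₀ : M k₀ = 1 := by
    rw [hk₀, hMmul, hMmul, hMmul, hMinv, hMinv]
    field_simp
    exact div_self (ne_of_gt (mul_pos (hM A) (hM B)))
  obtain ⟨t₁, ht₁⟩ : ∃ t₁ : ℝ, (k₀ : Equiv.Perm ℝ) t₁ ≠ t₁ := by
    by_contra hcon
    push_neg at hcon
    apply hk₀ne
    have : (k₀ : Equiv.Perm ℝ) = 1 := Equiv.ext (fun t => hcon t)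
    exact Subtype.coe_injective this
  have ht₁I : t₁ ∈ Icc a c := hPL k₀ |>.2.2 ht₁
  have ht₁a : a < t₁ := by
    rcases eq_or_lt_of_le ht₁I.1 with h | h
    · exact absurd (h ▸ PLo.fix_left hac (hPL k₀)) (h ▸ ht₁)
    · exact h
  have ht₁c : t₁ < c := by
    rcases eq_or_lt_of_le ht₁I.2 with h | h
    · exact absurd (h ▸ PLo.fix_right hac (hPL k₀)) (h ▸ ht₁)
    · exact h
  -- the orbit of t₁ accumulates at a
  set S : Set ℝ := Set.range (fun u : G => (u : Equiv.Perm ℝ) t₁) with hS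
  have hSa : ∀ s ∈ S, a < s := by
    rintro s ⟨u, rfl⟩
    have := (hPL u).1 ht₁a
    rwa [PLo.fix_left hac (hPL u)] at this
  have hSne : S.Nonempty := ⟨t₁, 1, by simp⟩
  have hbdd : BddBelow S := ⟨a, fun s hs => (hSa s hs).le⟩
  set i : ℝ := sInf S with hi
  have hit₁ : i ≤ t₁ := csInf_le hbdd ⟨1, by simp⟩
  have hia : a ≤ i := le_csInf hSne (fun s hs => (hSa s hs).le)
  have hSclosed : ∀ (u : G), ∀ s ∈ S, (u : Equiv.Perm ℝ) s ∈ S := by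
    rintro u s ⟨v, rfl⟩
    exact ⟨u * v, by simp [Equiv.Perm.mul_apply]⟩
  have hge : ∀ u : G, i ≤ (u : Equiv.Perm ℝ) i := by
    intro u
    by_contra hlt
    rw [not_le] at hlt
    have hcont : ContinuousAt (⇑(u : Equiv.Perm ℝ)) i := (PLo.continuous (hPL u)).continuousAt
    rw [Metric.continuousAt_iff] at hcont
    obtain ⟨d, hd, hball⟩ := hcont (i - (u : Equiv.Perm ℝ) i) (by linarith)
    obtain ⟨s, hsS, hsi⟩ := exists_lt_of_csInf_lt hSne (show i < i + d by linarith)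
    have hsge : i ≤ s := csInf_le hbdd hsS
    have hdist : dist s i < d := by
      rw [Real.dist_eq, abs_of_nonneg (by linarith)]
      linarith
    have := hball hdist
    rw [Real.dist_eq] at this
    have hus : (u : Equiv.Perm ℝ) s < i := by
      have := abs_lt.1 this
      linarith
    exact absurd (csInf_le hbdd (hSclosed u s hsS)) (not_le.2 hus)
  have hfix : ∀ u : G, a < i → (u : Equiv.Perm ℝ) i = i := by
    intro u hai
    refine le_antisymm ?_ (hge u)
    have h1 := hge u⁻¹
    have h4 : (u : Equiv.Perm ℝ) i ≤ (u : Equiv.Perm ℝ) (((u⁻¹ : G) : Equiv.Perm ℝ) i) :=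
      ((hPL u).1).le_iff_le.2 h1
    have h3 : (u : Equiv.Perm ℝ) (((u⁻¹ : G) : Equiv.Perm ℝ) i) = i := by simp
    rwa [h3] at h4
  have hieqa : i = a := by
    by_contra hne3
    have hai : a < i := lt_of_le_of_ne hia (Ne.symm hne3)
    obtain ⟨gm, hgmG, hgm⟩ := hirr i hai (lt_of_le_of_lt hit₁ ht₁c)
    exact hgm (hfix ⟨gm, hgmG⟩ hai)
  obtain ⟨s₀, hs₀S, hs₀δ⟩ := exists_lt_of_csInf_lt hSne
    (show i < a + δ by rw [hieqa]; linarith)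
  obtain ⟨u, hu⟩ := hs₀S
  have hs₀a : a < s₀ := hSa s₀ ⟨u, hu⟩
  -- the conjugated commutator
  set k' : G := u * k₀ * u⁻¹ with hk'
  have hMk' : M k' = 1 := by
    rw [hk', hMmul, hMmul, hMinv, hMk₀]
    field_simp
    exact div_self (ne_of_gt (hM u))
  have hchik' : chiL G a k' = 0 := by rw [hchi, hMk', Real.log_one]
  have hchi1 : chiL G a 1 = 0 := by rw [hchi, hMone, Real.log_one]
  -- connectivity gives a path from 1 to k'
  have hpath := hmem X hgen 1 k' (le_of_eq hchi1.symm) (le_of_eq hchik'.symm)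
  -- invariant along paths starting at 1
  have hInv : ∀ w : G, Relation.ReflTransGen
      (fun u v : G => 0 ≤ chiL G a u ∧ 0 ≤ chiL G a v ∧
        ∃ x ∈ X, v = u * x ∨ u = v * x) 1 w →
      AffR a (⇑((w⁻¹ : G) : Equiv.Perm ℝ)) (M w⁻¹) δ := by
    intro w hw
    induction hw with
    | refl =>
      have : M (1 : G)⁻¹ = 1 := by rw [hMinv, hMone]; norm_num
      rw [this]
      intro t ht ht'
      simp
    | @tail b cq hb hstep ih =>
      obtain ⟨hb0, hc0, x, hxX, hcase⟩ := hstep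
      have hMb : 1 ≤ M b := hMone_le b hb0
      have hMbinv : M b⁻¹ ≤ 1 := by
        rw [hMinv]
        exact inv_le_one_of_one_le₀ hMb
      have hMbinvp : 0 < M b⁻¹ := hM _
      rcases hcase with h | h
      · -- cq = b * x, cq⁻¹ = x⁻¹ * b⁻¹
        have hcomp : AffR a (fun t => ((x⁻¹ : G) : Equiv.Perm ℝ)
            (((b⁻¹ : G) : Equiv.Perm ℝ) t)) (M x⁻¹ * M b⁻¹) δ :=
          (hxX.2).comp ih hMbinvp le_rfl (by nlinarith)
        have hcq : cq⁻¹ = x⁻¹ * b⁻¹ := by rw [h]; group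
        have h8 : AffR a (⇑((x⁻¹ * b⁻¹ : G) : Equiv.Perm ℝ)) (M x⁻¹ * M b⁻¹) δ :=
          hcomp.congr (fun t => by simp [Equiv.Perm.mul_apply])
        rw [hcq, hMmul]
        exact h8
      · -- b = cq * x, cq⁻¹ = x * b⁻¹
        have hcomp : AffR a (fun t => ((x : G) : Equiv.Perm ℝ)
            (((b⁻¹ : G) : Equiv.Perm ℝ) t)) (M x * M b⁻¹) δ :=
          (hxX.1).comp ih hMbinvp le_rfl (by nlinarith)
        have hcq : cq⁻¹ = x * b⁻¹ := by rw [h]; group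
        have h8 : AffR a (⇑((x * b⁻¹ : G) : Equiv.Perm ℝ)) (M x * M b⁻¹) δ :=
          hcomp.congr (fun t => by simp [Equiv.Perm.mul_apply])
        rw [hcq, hMmul]
        exact h8
  have hInvk' := hInv k' hpath
  have hMk'inv : M k'⁻¹ = 1 := by rw [hMinv, hMk']; norm_num
  rw [hMk'inv] at hInvk'
  -- k' is the identity on [a, a + δ), in particular at s₀
  have hfixs₀ : (k' : Equiv.Perm ℝ) s₀ = s₀ := by
    have h1 : ((k'⁻¹ : G) : Equiv.Perm ℝ) s₀ = s₀ := by
      rw [hInvk' s₀ hs₀a.le hs₀δ]; ring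
    calc (k' : Equiv.Perm ℝ) s₀ = (k' : Equiv.Perm ℝ) (((k'⁻¹ : G) : Equiv.Perm ℝ) s₀) := by
          rw [h1]
    _ = s₀ := by
          rw [show ((k'⁻¹ : G) : Equiv.Perm ℝ) = ((k' : Equiv.Perm ℝ))⁻¹ from rfl]
          exact Equiv.apply_symm_apply _ _
  -- but k' moves s₀
  apply ht₁
  have : (k' : Equiv.Perm ℝ) s₀ = (u : Equiv.Perm ℝ) ((k₀ : Equiv.Perm ℝ) t₁) := by
    rw [hk', ← hu]
    simp [Equiv.Perm.mul_apply]
  rw [this, ← hu] at hfixs₀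
  exact (hPL u).1.injective hfixs₀


/-- mirror of `AffR.rightSlope_eq` at the right endpoint. -/
lemma leftSlope_eq {c : ℝ} {g : ℝ → ℝ} {m e : ℝ}
    (h : ∀ u, c - e < u → u ≤ c → g u = c + m * (u - c)) (he : 0 < e) :
    leftSlope g c = m := by
  have H : HasDerivWithinAt (fun t : ℝ => c + m * (t - c)) m (Iic c) c := by
    have : HasDerivAt (fun t : ℝ => c + m * (t - c)) (m * 1) c :=
      (((hasDerivAt_id c).sub_const c).const_mul m).const_add c
    simpa using this.hasDerivWithinAt
  have Heq : (g : ℝ → ℝ) =ᶠ[nhdsWithin c (Iic c)] (fun t : ℝ => c + m * (t - c)) := by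
    rw [eventuallyEq_nhdsWithin_iff]
    filter_upwards [Ioo_mem_nhds (show c - e < c by linarith) (show c < c + e by linarith)]
      with t ht htc
    exact h t ht.1 htc
  have H2 : HasDerivWithinAt g m (Iic c) c :=
    H.congr_of_eventuallyEq Heq (by rw [h c (by linarith) le_rfl])
  exact H2.derivWithin (uniqueDiffOn_Iic c c Set.self_mem_Iic)


/-- **Proposition (Statement 7).** For a non-abelian irreducible `G ≤ PL_o([a,c])`:
if `χ_ℓ` is non-zero then `[χ_ℓ] ∉ Σ¹(G)`, and likewise for `χ_r`. -/
theorem chiL_chiR_not_memSigma1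
    (a c : ℝ) (hac : a < c)
    (G : Subgroup (Equiv.Perm ℝ)) (hG : (G : Set (Equiv.Perm ℝ)) ⊆ PLo (Icc a c))
    (hna : ∃ g ∈ G, ∃ h ∈ G, g * h ≠ h * g)
    (hirr : ∀ t : ℝ, a < t → t < c → ∃ g ∈ G, g t ≠ t) :
    ((∃ g : G, chiL G a g ≠ 0) → ¬ MemSigma1 (chiL G a)) ∧
    ((∃ g : G, chiR G c g ≠ 0) → ¬ MemSigma1 (chiR G c)) := by
  constructor
  · exact fun hχ => core_not_memSigma1 a c hac G hG hna hirr hχ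
  · intro hχ hmem
    -- reflect the line by t ↦ a + c - t
    have hinvol : Function.Involutive (fun t : ℝ => a + c - t) := fun t => by simp
    set ν : Equiv.Perm ℝ := hinvol.toPerm (fun t : ℝ => a + c - t) with hν
    have hνap : ∀ t, ν t = a + c - t := fun t => rfl
    have hνinvap : ∀ t, (ν⁻¹ : Equiv.Perm ℝ) t = a + c - t := fun t => rfl
    set κ : Equiv.Perm ℝ ≃* Equiv.Perm ℝ := MulAut.conj ν with hκ
    have hκap : ∀ (g : Equiv.Perm ℝ) (t : ℝ), (κ g) t = a + c - g (a + c - t) := by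
      intro g t
      rw [hκ, MulAut.conj_apply]
      rw [show (ν * g * ν⁻¹) t = ν (g ((ν⁻¹ : Equiv.Perm ℝ) t)) from rfl]
      rw [hνinvap, hνap]
    -- conjugation preserves PLo (Icc a c)
    have hconjPLo : ∀ g ∈ PLo (Icc a c), κ g ∈ PLo (Icc a c) := by
      intro g hg
      refine ⟨?_, ?_, ?_⟩
      · intro t s hts
        rw [hκap, hκap]
        have h1 : a + c - s < a + c - t := by linarith
        have h2 := hg.1 h1
        linarith
      · obtain ⟨B, hB⟩ := hg.2.1
        refine ⟨B.image (fun t => a + c - t), ?_⟩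
        intro t ht
        have htB : a + c - t ∉ B := by
          intro hmem2
          exact ht (Finset.mem_image.2 ⟨a + c - t, hmem2, by ring⟩)
        obtain ⟨m, b, ε, hε, hmb⟩ := hB _ htB
        refine ⟨m, (a + c) * (1 - m) - b, ε, hε, ?_⟩
        intro u hu
        rw [hκap]
        have : |a + c - u - (a + c - t)| < ε := by
          rw [show a + c - u - (a + c - t) = -(u - t) by ring, abs_neg]
          exact hu
        rw [hmb _ this]
        ring
      · intro t ht
        have h1 : g (a + c - t) ≠ a + c - t := by
          intro heq
          apply ht
          show (κ g) t = t
          rw [hκap, heq]; ring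
        have h2 : a + c - t ∈ Icc a c := hg.2.2 h1
        constructor
        · linarith [h2.2]
        · linarith [h2.1]
    set G' : Subgroup (Equiv.Perm ℝ) := Subgroup.map κ.toMonoidHom G with hG'def
    have hκinj : Function.Injective κ.toMonoidHom := κ.injective
    set φ : G ≃* G' := Subgroup.equivMapOfInjective G κ.toMonoidHom hκinj with hφ
    have hφap : ∀ g : G, ((φ g : G') : Equiv.Perm ℝ) = κ (g : Equiv.Perm ℝ) :=
      fun g => Subgroup.coe_equivMapOfInjective_apply G κ.toMonoidHom hκinj g
    have hG'sub : (G' : Set (Equiv.Perm ℝ)) ⊆ PLo (Icc a c) := by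
      rintro _ ⟨g, hg, rfl⟩
      exact hconjPLo g (hG hg)
    have hna' : ∃ g ∈ G', ∃ h ∈ G', g * h ≠ h * g := by
      obtain ⟨g, hg, h, hh, hne⟩ := hna
      refine ⟨κ g, ⟨g, hg, rfl⟩, κ h, ⟨h, hh, rfl⟩, ?_⟩
      intro hcon
      apply hne
      apply κ.injective
      rw [map_mul, map_mul, hcon]
    have hirr' : ∀ t : ℝ, a < t → t < c → ∃ g ∈ G', g t ≠ t := by
      intro t ht1 ht2
      obtain ⟨g, hg, hgt⟩ := hirr (a + c - t) (by linarith) (by linarith)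
      refine ⟨κ g, ⟨g, hg, rfl⟩, ?_⟩
      rw [hκap]
      intro hcon
      apply hgt
      have : g (a + c - t) = a + c - t := by linarith [hcon]
      exact this
    -- slope transport
    have hchiRL : ∀ g : G, chiR G c g = chiL G' a (φ g) := by
      intro g
      have hgPL : (g : Equiv.Perm ℝ) ∈ PLo (Icc a c) := hG g.2
      have hκgPL : κ (g : Equiv.Perm ℝ) ∈ PLo (Icc a c) := hconjPLo _ hgPL
      obtain ⟨m, e, hm, he, hAff⟩ := PLo.exists_affR hac hκgPL
      have h1 : rightSlope (⇑(κ (g : Equiv.Perm ℝ))) a = m := hAff.rightSlope_eq he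
      have h2 : leftSlope (⇑(g : Equiv.Perm ℝ)) c = m := by
        apply leftSlope_eq (e := e) _ he
        intro u hu1 hu2
        have h3 := hAff (a + c - u) (by linarith) (by linarith)
        rw [hκap] at h3
        have h4 : a + c - (a + c - u) = u := by ring
        rw [h4] at h3
        have h5 : (g : Equiv.Perm ℝ) u = a + c - (a + m * (a + c - u - a)) := by linarith
        rw [h5]; ring
      rw [chiR, chiL, h2, hφap, h1]
    -- transport MemSigma1
    have hmem' : MemSigma1 (chiL G' a) := by
      intro X' hX'
      set X : Set G := ⇑φ ⁻¹' X' with hXdef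
      have himg : ⇑φ.toMonoidHom '' X = X' := by
        rw [hXdef, show ⇑φ.toMonoidHom = ⇑φ from rfl]
        exact Set.image_preimage_eq X' φ.surjective
      have hXgen : Subgroup.closure X = ⊤ := by
        have hmapcl : Subgroup.map φ.toMonoidHom (Subgroup.closure X)
            = Subgroup.closure X' := by
          rw [MonoidHom.map_closure, himg]
        rw [Subgroup.eq_top_iff']
        intro g
        have : φ g ∈ Subgroup.map φ.toMonoidHom (Subgroup.closure X) := by
          rw [hmapcl, hX']
          trivial
        obtain ⟨x, hx, hxe⟩ := this
        rwa [show x = g from φ.injective hxe] at hx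
      intro g' h' hg0 hh0
      have hpath := hmem X hXgen (φ.symm g') (φ.symm h')
        (by rw [hchiRL, φ.apply_symm_apply]; exact hg0)
        (by rw [hchiRL, φ.apply_symm_apply]; exact hh0)
      have hlift := Relation.ReflTransGen.lift (r := fun u v : G =>
          0 ≤ chiR G c u ∧ 0 ≤ chiR G c v ∧ ∃ x ∈ X, v = u * x ∨ u = v * x)
        (p := fun u v : G' =>
          0 ≤ chiL G' a u ∧ 0 ≤ chiL G' a v ∧ ∃ x ∈ X', v = u * x ∨ u = v * x)
        ⇑φ ?_ _ _ hpath
      · rw [Function.onFun] at hlift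
        rwa [φ.apply_symm_apply, φ.apply_symm_apply] at hlift
      · rintro u v ⟨hu0, hv0, x, hxX, hcase⟩
        refine ⟨by rw [← hchiRL]; exact hu0, by rw [← hchiRL]; exact hv0, φ x, hxX, ?_⟩
        rcases hcase with h | h
        · left; rw [h, map_mul]
        · right; rw [h, map_mul]
    -- get a non-vanishing character on G'
    have hχ' : ∃ g' : G', chiL G' a g' ≠ 0 := by
      obtain ⟨g, hg⟩ := hχ
      exact ⟨φ g, by rw [← hchiRL]; exact hg⟩
    exact core_not_memSigma1 a c hac G' hG'sub hna' hirr' hχ' hmem'
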